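/- Let X be a real n×k matrix with singular value decomposition X = U D Vᵀ, where U is an n×k real matrix with UᵀU equal to the k×k identity, V is a k×k real orthogonal matrix, and D is the k×k diagonal matrix with diagonal entries λ₁,…,λ_k. Let y ∈ ℝⁿ, γ ∈ ℝ, and for σ₁ > 0, σ₂ > 0, β ∈ ℝᵏ define q(σ₁,σ₂,β) = σ₁^{−(k+1)} σ₂^{−n} exp( −γ (log σ₁)² − σ₂²/2 − ‖Xβ − y‖²/(2σ₂²) − ‖β‖²/(2σ₁²) ). Set w = VᵀXᵀy, a₂ᵢ = λᵢ²/(2σ₂²) + 1/(2σ₁²), a₁ᵢ = wᵢ/σ₂², a₀ = −yᵀy/(2σ₂²), and q̃(σ₁,σ₂) = σ₁^{−(k+1)} σ₂^{−n} exp( −γ (log σ₁)² − σ₂²/2 + a₀ + ∑_{i=1}^{k} a₁ᵢ²/(4 a₂ᵢ) ) · (2π)^{k/2} · ∏_{i=1}^{k} (2 a₂ᵢ)^{−1/2}. Then for every measurable nonnegative function f : (0,∞) × (0,∞) → ℝ, the iterated integral ∫_{0}^{∞} ∫_{0}^{∞} ∫_{ℝᵏ} f(σ₁,σ₂) q(σ₁,σ₂,β)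 dβ dσ₂ dσ₁ equals ∫_{0}^{∞} ∫_{0}^{∞} f(σ₁,σ₂) q̃(σ₁,σ₂) dσ₂ dσ₁. In particular, taking f(σ₁,σ₂) = σ₁ and f(σ₁,σ₂) = σ₂ shows that the unnormalized posterior moments of σ₁ and σ₂ with respect to q equal those with respect to q̃. -/

import Mathlib

open Matrix MeasureTheory

lemma gauss1 (a b : ℝ) (ha : 0 < a) :
    ∫ x : ℝ, Real.exp (-a * x ^ 2 + b * x)
      = Real.exp (b ^ 2 / (4 * a)) * Real.sqrt (Real.pi / a) := by
  calc ∫ x : ℝ, Real.exp (-a * x ^ 2 + b * x)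
      = ∫ x : ℝ, Real.exp (b ^ 2 / (4 * a)) * Real.exp (-a * (x - b / (2 * a)) ^ 2) := by
        congr 1; ext x; rw [← Real.exp_add]; congr 1; field_simp; ring
    _ = Real.exp (b ^ 2 / (4 * a)) * ∫ x : ℝ, Real.exp (-a * (x - b / (2 * a)) ^ 2) :=
        integral_const_mul _ _
    _ = _ := by
        rw [integral_sub_right_eq_self (fun x => Real.exp (-a * x ^ 2)) (b / (2 * a)),
          integral_gaussian]

lemma gaussk {k : ℕ} (a b : Fin k → ℝ) (ha : ∀ i, 0 < a i) :
    ∫ α : EuclideanSpace ℝ (Fin k), Real.exp (∑ i, (-(a i) * α i ^ 2 + b i * α i))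
      = ∏ i, (Real.exp (b i ^ 2 / (4 * a i)) * Real.sqrt (Real.pi / a i)) := by
  rw [← MeasurePreserving.integral_comp
      (EuclideanSpace.volume_preserving_symm_measurableEquiv_toLp (Fin k)).symm
      (MeasurableEquiv.measurableEmbedding _)]
  have : ∀ x : Fin k → ℝ,
      Real.exp (∑ i, (-(a i) * ((MeasurableEquiv.toLp 2 (Fin k → ℝ)).symm.symm x) i ^ 2
          + b i * ((MeasurableEquiv.toLp 2 (Fin k → ℝ)).symm.symm x) i))
        = ∏ i, Real.exp (-(a i) * x i ^ 2 + b i * x i) := by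
    intro x; rw [Real.exp_sum]; rfl
  simp_rw [this]
  rw [volume_pi, integral_fintype_prod_eq_prod (f := fun i (x : ℝ) => Real.exp (-(a i) * x ^ 2 + b i * x))]
  exact Finset.prod_congr rfl fun i _ => gauss1 (a i) (b i) (ha i)

noncomputable def matIso {k : ℕ} (V : Matrix (Fin k) (Fin k) ℝ)
    (hV₁ : Vᵀ * V = 1) (hV₂ : V * Vᵀ = 1) :
    EuclideanSpace ℝ (Fin k) ≃ₗᵢ[ℝ] EuclideanSpace ℝ (Fin k) :=
  LinearEquiv.isometryOfInner
    (LinearEquiv.ofLinear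
      ((WithLp.linearEquiv 2 ℝ (Fin k → ℝ)).symm.toLinearMap ∘ₗ V.mulVecLin ∘ₗ
        (WithLp.linearEquiv 2 ℝ (Fin k → ℝ)).toLinearMap)
      ((WithLp.linearEquiv 2 ℝ (Fin k → ℝ)).symm.toLinearMap ∘ₗ Vᵀ.mulVecLin ∘ₗ
        (WithLp.linearEquiv 2 ℝ (Fin k → ℝ)).toLinearMap)
      (by
        ext x
        show (V *ᵥ (Vᵀ *ᵥ x)) _ = x _
        rw [Matrix.mulVec_mulVec, hV₂, Matrix.one_mulVec])
      (by
        ext x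
        show (Vᵀ *ᵥ (V *ᵥ x)) _ = x _
        rw [Matrix.mulVec_mulVec, hV₁, Matrix.one_mulVec]))
    (by
      intro x y
      have key : (V *ᵥ x) ⬝ᵥ (V *ᵥ y) = x ⬝ᵥ y := by
        rw [Matrix.dotProduct_mulVec, ← Matrix.mulVec_transpose, Matrix.mulVec_mulVec, hV₁,
          Matrix.one_mulVec]
      simpa [PiLp.inner_apply, RCLike.inner_apply, dotProduct, mul_comm] using key)

lemma matIso_apply {k : ℕ} (V : Matrix (Fin k) (Fin k) ℝ)
    (hV₁ : Vᵀ * V = 1) (hV₂ : V * Vᵀ = 1) (x : EuclideanSpace ℝ (Fin k)) (i : Fin k) :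
    matIso V hV₁ hV₂ x i = (V *ᵥ x) i := rfl


lemma esq {m : ℕ} (v : EuclideanSpace ℝ (Fin m)) : ‖v‖ ^ 2 = ∑ i, v i ^ 2 := by
  rw [EuclideanSpace.norm_eq, Real.sq_sqrt (by positivity)]
  simp [Real.norm_eq_abs, sq_abs]

lemma innerInt
    (n k : ℕ)
    (X U : Matrix (Fin n) (Fin k) ℝ)
    (V : Matrix (Fin k) (Fin k) ℝ)
    (lam : Fin k → ℝ)
    (hU : Uᵀ * U = 1)
    (hV₁ : Vᵀ * V = 1) (hV₂ : V * Vᵀ = 1)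
    (hX : X = U * Matrix.diagonal lam * Vᵀ)
    (y : EuclideanSpace ℝ (Fin n))
    (w : Fin k → ℝ)
    (hw : w = Vᵀ.mulVec (Xᵀ.mulVec y))
    (σ₁ σ₂ : ℝ) (h₁ : 0 < σ₁) (h₂ : 0 < σ₂) :
    ∫ β : EuclideanSpace ℝ (Fin k),
        Real.exp (-(‖(EuclideanSpace.equiv (Fin n) ℝ).symm (X.mulVec β) - y‖ ^ 2 / (2 * σ₂ ^ 2))
          - ‖β‖ ^ 2 / (2 * σ₁ ^ 2))
      = Real.exp (-(y ⬝ᵥ y) / (2 * σ₂ ^ 2)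
            + ∑ i, (w i / σ₂ ^ 2) ^ 2 / (4 * (lam i ^ 2 / (2 * σ₂ ^ 2) + 1 / (2 * σ₁ ^ 2))))
          * (2 * Real.pi) ^ ((k : ℝ) / 2)
          * ∏ i, (2 * (lam i ^ 2 / (2 * σ₂ ^ 2) + 1 / (2 * σ₁ ^ 2))) ^ (-(1 / 2 : ℝ)) := by
  set a : Fin k → ℝ := fun i => lam i ^ 2 / (2 * σ₂ ^ 2) + 1 / (2 * σ₁ ^ 2) with ha
  have hapos : ∀ i, 0 < a i := fun i => by positivity
  set b : Fin k → ℝ := fun i => w i / σ₂ ^ 2 with hb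
  set e := matIso V hV₁ hV₂ with he
  rw [← MeasurePreserving.integral_comp e.measurePreserving
      e.toHomeomorph.measurableEmbedding]
  have hpt : ∀ α : EuclideanSpace ℝ (Fin k),
      -(‖(EuclideanSpace.equiv (Fin n) ℝ).symm (X.mulVec (e α)) - y‖ ^ 2 / (2 * σ₂ ^ 2))
          - ‖e α‖ ^ 2 / (2 * σ₁ ^ 2)
        = (∑ i, (-(a i) * α i ^ 2 + b i * α i)) + (-(y ⬝ᵥ y) / (2 * σ₂ ^ 2)) := by
    intro α
    have hXV : X.mulVec (e α) = (X * V).mulVec α := by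
      have : X.mulVec (e α) = X.mulVec (V.mulVec α) := rfl
      rw [this, Matrix.mulVec_mulVec]
    have hXe : X.mulVec (e α) = U.mulVec ((Matrix.diagonal lam).mulVec α) := by
      rw [hXV, hX, Matrix.mul_assoc (U * _), hV₁, Matrix.mul_one, ← Matrix.mulVec_mulVec]
    have hnorm1 : ‖(EuclideanSpace.equiv (Fin n) ℝ).symm (X.mulVec (e α)) - y‖ ^ 2
        = (∑ i, (lam i * α i) ^ 2) - 2 * (∑ i, w i * α i) + y ⬝ᵥ y := by
      rw [esq]
      have expand : ∀ i : Fin n,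
          ((EuclideanSpace.equiv (Fin n) ℝ).symm (X.mulVec (e α)) - y) i ^ 2
            = (X.mulVec (e α)) i ^ 2 - 2 * ((X.mulVec (e α)) i * y i) + y i ^ 2 := by
        intro i
        have : ((EuclideanSpace.equiv (Fin n) ℝ).symm (X.mulVec (e α)) - y) i
            = (X.mulVec (e α)) i - y i := rfl
        rw [this]; ring
      rw [Finset.sum_congr rfl fun i _ => expand i]
      have h1 : ∑ i, (X.mulVec (e α)) i ^ 2 = ∑ i, (lam i * α i) ^ 2 := by
        have step : ∑ i, (X.mulVec (e α)) i ^ 2 = (X.mulVec (e α)) ⬝ᵥ (X.mulVec (e α)) := by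
          simp [dotProduct, sq]
        rw [step, hXe, Matrix.dotProduct_mulVec, ← Matrix.mulVec_transpose,
          Matrix.mulVec_mulVec, hU, Matrix.one_mulVec]
        simp [dotProduct, Matrix.mulVec_diagonal, sq]
        try ring_nf
      have h2 : ∑ i, (X.mulVec (e α)) i * y i = ∑ i, w i * α i := by
        have lhs : ∑ i, (X.mulVec (e α)) i * y i = y ⬝ᵥ ((X * V).mulVec α) := by
          rw [hXV]; simp [dotProduct, mul_comm]
        have rhs : ∑ i, w i * α i = w ⬝ᵥ α := rfl
        rw [lhs, rhs, hw, Matrix.mulVec_mulVec, Matrix.dotProduct_mulVec,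
          ← Matrix.mulVec_transpose, Matrix.transpose_mul]
      rw [Finset.sum_add_distrib, Finset.sum_sub_distrib, h1, ← Finset.mul_sum, h2]
      congr 1
      simp [dotProduct, sq]
    have hnorm2 : ‖e α‖ ^ 2 = ∑ i, α i ^ 2 := by rw [e.norm_map, esq]
    rw [hnorm1, hnorm2]
    have expand2 : ∀ i : Fin k, -(a i) * α i ^ 2 + b i * α i
        = -((lam i * α i) ^ 2) / (2 * σ₂ ^ 2) - α i ^ 2 / (2 * σ₁ ^ 2) + (w i * α i) / σ₂ ^ 2 := by
      intro i
      rw [ha, hb]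
      field_simp
      ring
    rw [Finset.sum_congr rfl fun i _ => expand2 i, Finset.sum_add_distrib,
      Finset.sum_sub_distrib, ← Finset.sum_div, ← Finset.sum_div, ← Finset.sum_div,
      Finset.sum_neg_distrib]
    field_simp
    ring
  simp_rw [hpt, Real.exp_add, integral_mul_const, gaussk a b hapos]
  rw [Finset.prod_mul_distrib, ← Real.exp_sum]
  have hS : (∑ i, (w i / σ₂ ^ 2) ^ 2 / (4 * (lam i ^ 2 / (2 * σ₂ ^ 2) + 1 / (2 * σ₁ ^ 2))))
      = ∑ i, b i ^ 2 / (4 * a i) := rfl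
  have hP : (∏ i, (2 * (lam i ^ 2 / (2 * σ₂ ^ 2) + 1 / (2 * σ₁ ^ 2))) ^ (-(1 / 2 : ℝ)))
      = ∏ i, (2 * a i) ^ (-(1 / 2 : ℝ)) := rfl
  rw [hS, hP]
  have hsqrt : ∀ i : Fin k, Real.sqrt (Real.pi / a i)
      = Real.sqrt (2 * Real.pi) * (2 * a i) ^ (-(1 / 2 : ℝ)) := by
    intro i
    rw [Real.rpow_neg (by positivity), ← Real.sqrt_eq_rpow, ← Real.sqrt_inv,
      ← Real.sqrt_mul (by positivity)]
    congr 1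
    have := (hapos i).ne'
    field_simp
  rw [Finset.prod_congr rfl fun i _ => hsqrt i, Finset.prod_mul_distrib, Finset.prod_const,
    Finset.card_univ, Fintype.card_fin]
  have h2pi : Real.sqrt (2 * Real.pi) ^ k = (2 * Real.pi) ^ ((k : ℝ) / 2) := by
    rw [Real.sqrt_eq_rpow, ← Real.rpow_natCast ((2 * Real.pi) ^ (1 / 2 : ℝ)) k,
      ← Real.rpow_mul (by positivity)]
    norm_num
    try ring_nf
  rw [h2pi]
  ring


/-- Section 3 of the paper, unnormalized moments of `σ₁, σ₂`:
for every measurable nonnegative `f` on `(0,∞) × (0,∞)`,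
`∫₀^∞ ∫₀^∞ ∫_{ℝᵏ} f(σ₁,σ₂) q(σ₁,σ₂,β) dβ dσ₂ dσ₁
  = ∫₀^∞ ∫₀^∞ f(σ₁,σ₂) q̃(σ₁,σ₂) dσ₂ dσ₁`. -/
theorem stmt10
    (n k : ℕ) (hn : 0 < n) (hk : 0 < k)
    (X U : Matrix (Fin n) (Fin k) ℝ)
    (V : Matrix (Fin k) (Fin k) ℝ)
    (lam : Fin k → ℝ)
    (hU : Uᵀ * U = 1)
    (hV₁ : Vᵀ * V = 1) (hV₂ : V * Vᵀ = 1)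
    (hX : X = U * Matrix.diagonal lam * Vᵀ)
    (y : EuclideanSpace ℝ (Fin n)) (γ : ℝ)
    (w : Fin k → ℝ)
    (hw : w = Vᵀ.mulVec (Xᵀ.mulVec y))
    (f : ℝ → ℝ → ℝ)
    (hf : Measurable (Function.uncurry f))
    (hf0 : ∀ σ₁ σ₂ : ℝ, 0 < σ₁ → 0 < σ₂ → 0 ≤ f σ₁ σ₂) :
    (∫ σ₁ in Set.Ioi (0 : ℝ), ∫ σ₂ in Set.Ioi (0 : ℝ),
        ∫ β : EuclideanSpace ℝ (Fin k),
          f σ₁ σ₂ *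
            (σ₁ ^ (-((k : ℤ) + 1)) * σ₂ ^ (-(n : ℤ)) *
              Real.exp (-γ * Real.log σ₁ ^ 2 - σ₂ ^ 2 / 2
                - ‖(EuclideanSpace.equiv (Fin n) ℝ).symm (X.mulVec β) - y‖ ^ 2 / (2 * σ₂ ^ 2)
                - ‖β‖ ^ 2 / (2 * σ₁ ^ 2))))
      = ∫ σ₁ in Set.Ioi (0 : ℝ), ∫ σ₂ in Set.Ioi (0 : ℝ),
          f σ₁ σ₂ *
            (σ₁ ^ (-((k : ℤ) + 1)) * σ₂ ^ (-(n : ℤ)) *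
              Real.exp (-γ * Real.log σ₁ ^ 2 - σ₂ ^ 2 / 2
                + (-(y ⬝ᵥ y) / (2 * σ₂ ^ 2))
                + ∑ i, (w i / σ₂ ^ 2) ^ 2 /
                    (4 * (lam i ^ 2 / (2 * σ₂ ^ 2) + 1 / (2 * σ₁ ^ 2)))) *
              (2 * Real.pi) ^ ((k : ℝ) / 2) *
              ∏ i, (2 * (lam i ^ 2 / (2 * σ₂ ^ 2) + 1 / (2 * σ₁ ^ 2))) ^ (-(1 / 2 : ℝ))) := by
  refine setIntegral_congr_fun measurableSet_Ioi fun σ₁ hσ₁ => ?_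
  refine setIntegral_congr_fun measurableSet_Ioi fun σ₂ hσ₂ => ?_
  have h₁ : (0:ℝ) < σ₁ := hσ₁
  have h₂ : (0:ℝ) < σ₂ := hσ₂
  have hpt : ∀ β : EuclideanSpace ℝ (Fin k),
      f σ₁ σ₂ *
          (σ₁ ^ (-((k : ℤ) + 1)) * σ₂ ^ (-(n : ℤ)) *
            Real.exp (-γ * Real.log σ₁ ^ 2 - σ₂ ^ 2 / 2
              - ‖(EuclideanSpace.equiv (Fin n) ℝ).symm (X.mulVec β) - y‖ ^ 2 / (2 * σ₂ ^ 2)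
              - ‖β‖ ^ 2 / (2 * σ₁ ^ 2)))
        = (f σ₁ σ₂ * (σ₁ ^ (-((k : ℤ) + 1)) * σ₂ ^ (-(n : ℤ))
            * Real.exp (-γ * Real.log σ₁ ^ 2 - σ₂ ^ 2 / 2)))
          * Real.exp (-(‖(EuclideanSpace.equiv (Fin n) ℝ).symm (X.mulVec β) - y‖ ^ 2 / (2 * σ₂ ^ 2))
              - ‖β‖ ^ 2 / (2 * σ₁ ^ 2)) := by
    intro β
    have : -γ * Real.log σ₁ ^ 2 - σ₂ ^ 2 / 2
          - ‖(EuclideanSpace.equiv (Fin n) ℝ).symm (X.mulVec β) - y‖ ^ 2 / (2 * σ₂ ^ 2)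
          - ‖β‖ ^ 2 / (2 * σ₁ ^ 2)
        = -γ * Real.log σ₁ ^ 2 - σ₂ ^ 2 / 2
          + (-(‖(EuclideanSpace.equiv (Fin n) ℝ).symm (X.mulVec β) - y‖ ^ 2 / (2 * σ₂ ^ 2))
              - ‖β‖ ^ 2 / (2 * σ₁ ^ 2)) := by ring
    rw [this, Real.exp_add]
    ring
  simp_rw [hpt]
  rw [integral_const_mul, innerInt n k X U V lam hU hV₁ hV₂ hX y w hw σ₁ σ₂ h₁ h₂]
  have : Real.exp (-γ * Real.log σ₁ ^ 2 - σ₂ ^ 2 / 2 + (-(y ⬝ᵥ y) / (2 * σ₂ ^ 2))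
        + ∑ i, (w i / σ₂ ^ 2) ^ 2 / (4 * (lam i ^ 2 / (2 * σ₂ ^ 2) + 1 / (2 * σ₁ ^ 2))))
      = Real.exp (-γ * Real.log σ₁ ^ 2 - σ₂ ^ 2 / 2)
        * Real.exp (-(y ⬝ᵥ y) / (2 * σ₂ ^ 2)
            + ∑ i, (w i / σ₂ ^ 2) ^ 2 / (4 * (lam i ^ 2 / (2 * σ₂ ^ 2) + 1 / (2 * σ₁ ^ 2)))) := by
    rw [← Real.exp_add]
    congr 1
    ring
  rw [this]
  ring
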